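/- Let n ≥ 7 be odd. The complementary-left-right majority network on n nodes solves the density classification task, and every configuration converges to the correct homogeneous fixed point within at most 4 iterations. -/

import Mathlib

/-- Number of `true` entries of `x` inside the finite set `S`. -/
def onesIn {V : Type*} [DecidableEq V] (S : Finset V) (x : V → Bool) : ℕ :=
  (S.filter (fun v => x v = true)).card

/-- Total number of ones in a configuration. -/
def ones {V : Type*} [Fintype V] [DecidableEq V] (x : V → Bool) : ℕ :=
  onesIn Finset.univ x

/-- Total number of zeros in a configuration. -/
def zeros {V : Type*} [Fintype V] [DecidableEq V] (x : V → Bool) : ℕ :=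
  (Finset.univ.filter (fun v => x v = false)).card

/-- One synchronous step of the majority Boolean automata network with
in-neighborhoods `N`: each node takes the majority state among its
in-neighbors, keeping its current state in case of a tie. -/
def majStep {V : Type*} [Fintype V] [DecidableEq V]
    (N : V → Finset V) (x : V → Bool) : V → Bool :=
  fun v =>
    if (N v).card < 2 * onesIn (N v) x then true
    else if 2 * onesIn (N v) x < (N v).card then false
    else x v

/-- In-neighborhoods of the complementary-left-right digraph.
With h = ⌊n/2⌋: U = (0,2,...,h-1), R = (1,h,...,n-1), S = (0,...,h-2)
(so S_j = j, |S| = h-1), T = (h-1,...,n-1) (so T_j = h-1+j, |T| = h+2).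
Node U_i sees V minus {S_((i+1) mod |S|), S_((i+2) mod |S|)};
node R_i sees V minus {T_((i-1) mod |T|), T_((i-2) mod |T|)}. -/
def clrN (n : ℕ) (v : Fin n) : Finset (Fin n) :=
  let h := n / 2
  let sLen := h - 1
  let tLen := h + 2
  if v.val = 0 ∨ (2 ≤ v.val ∧ v.val ≤ h - 1) then
    -- v = U_i with i = 0 if v = 0, else i = v - 1
    let i := if v.val = 0 then 0 else v.val - 1
    Finset.univ.filter (fun u : Fin n =>
      u.val ≠ (i + 1) % sLen ∧ u.val ≠ (i + 2) % sLen)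
  else
    -- v = R_i with i = 0 if v = 1, else i = v - h + 1
    let i := if v.val = 1 then 0 else v.val - h + 1
    Finset.univ.filter (fun u : Fin n =>
      u.val ≠ h - 1 + (i + tLen - 1) % tLen ∧
      u.val ≠ h - 1 + (i + tLen - 2) % tLen)

namespace CLR

/-! ### generic cycle lemmas -/

lemma cyc_le {L : ℕ} [NeZero L] (g : ZMod L → Bool) :
    ∑ i : ZMod L, (g i && g (i+1)).toNat ≤ ∑ i : ZMod L, (g i).toNat := by
  refine Finset.sum_le_sum fun i _ => ?_
  cases g i <;> cases g (i+1) <;> simp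

lemma cyc_prop {L : ℕ} [NeZero L] (g : ZMod L → Bool)
    (h : ∀ i : ZMod L, g i = true → g (i+1) = true) :
    (∀ i, g i = true) ∨ (∀ i, g i = false) := by
  by_cases he : ∃ i, g i = true
  · obtain ⟨i, hi⟩ := he
    left
    have key : ∀ k : ℕ, g (i + (k : ZMod L)) = true := by
      intro k
      induction k with
      | zero => simpa using hi
      | succ k ih =>
          have : ((k+1 : ℕ) : ZMod L) = (k : ZMod L) + 1 := by push_cast; ring
          rw [this, ← add_assoc]
          exact h _ ih
    intro j
    have := key (j - i).val
    rwa [ZMod.natCast_val, ZMod.cast_id, add_sub_cancel] at this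
  · right
    intro i
    rcases Bool.eq_false_or_eq_true (g i) with h' | h'
    · exact absurd ⟨i, h'⟩ he
    · exact h'

lemma cyc_eq {L : ℕ} [NeZero L] (g : ZMod L → Bool)
    (h : ∑ i : ZMod L, (g i && g (i+1)).toNat = ∑ i : ZMod L, (g i).toNat) :
    (∀ i, g i = true) ∨ (∀ i, g i = false) := by
  refine cyc_prop g fun i hi => ?_
  have := (Finset.sum_eq_sum_iff_of_le
    (fun i _ => by cases g i <;> cases g (i+1) <;> simp)).mp h i (Finset.mem_univ i)
  rw [hi] at this
  cases hgi : g (i+1)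
  · rw [hgi] at this; simp at this
  · rfl

lemma zmod_sum_val {L : ℕ} [NeZero L] (f : ℕ → ℕ) :
    ∑ i : ZMod L, f i.val = ∑ j ∈ Finset.range L, f j := by
  rw [Finset.sum_range]
  refine Finset.sum_nbij' (fun i => (⟨i.val, ZMod.val_lt i⟩ : Fin L))
    (fun j => (j.val : ZMod L)) ?_ ?_ ?_ ?_ ?_ <;>
    intros <;> simp [ZMod.val_natCast, Nat.mod_eq_of_lt (Fin.is_lt _)]

lemma mod_succ_ne {s a : ℕ} (hs : 2 ≤ s) : (a+1) % s ≠ a % s := by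
  have h1 : (a+1) % s = (a % s + 1) % s := (Nat.mod_add_mod a s 1).symm
  have hlt : a % s < s := Nat.mod_lt _ (by omega)
  rcases Nat.lt_or_ge (a % s + 1) s with h | h
  · rw [h1, Nat.mod_eq_of_lt h]; omega
  · have hs1 : a % s = s - 1 := by omega
    rw [h1, hs1]
    have : (s - 1 + 1) % s = 0 := by
      have : s - 1 + 1 = s := by omega
      rw [this, Nat.mod_self]
    rw [this]; omega

/-! ### basic defs -/

variable (n m : ℕ)

def ext (x : Fin n → Bool) (j : ℕ) : Bool := if h : j < n then x ⟨j, h⟩ else false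

def eA (j : ℕ) : ℕ :=
  if j = 0 ∨ (2 ≤ j ∧ j ≤ m - 1) then
    ((if j = 0 then 0 else j - 1) + 1) % (m - 1)
  else m - 1 + ((if j = 1 then 0 else j - m + 1) + (m + 2) - 1) % (m + 2)

def eB (j : ℕ) : ℕ :=
  if j = 0 ∨ (2 ≤ j ∧ j ≤ m - 1) then
    ((if j = 0 then 0 else j - 1) + 2) % (m - 1)
  else m - 1 + ((if j = 1 then 0 else j - m + 1) + (m + 2) - 2) % (m + 2)

lemma clrN_eq (hn : n = 2*m+1) (v : Fin n) :
    clrN n v = Finset.univ.filter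
      (fun u : Fin n => u.val ≠ eA m v.val ∧ u.val ≠ eB m v.val) := by
  have h2 : n / 2 = m := by omega
  by_cases hc : v.val = 0 ∨ (2 ≤ v.val ∧ v.val ≤ m - 1)
  · simp only [clrN, h2, eA, eB, if_pos hc]
  · simp only [clrN, h2, eA, eB, if_neg hc]


/-! ### neighborhood facts -/

lemma e_facts (hn : n = 2*m+1) (hm : 3 ≤ m) (j : ℕ) :
    eA m j < n ∧ eB m j < n ∧ eA m j ≠ eB m j := by
  have hs : 2 ≤ m - 1 := by omega
  have ht : 2 ≤ m + 2 := by omega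
  unfold eA eB
  by_cases hc : j = 0 ∨ (2 ≤ j ∧ j ≤ m - 1)
  · rw [if_pos hc, if_pos hc]
    set i := (if j = 0 then 0 else j - 1)
    have h1 : (i + 1) % (m-1) < m - 1 := Nat.mod_lt _ (by omega)
    have h2 : (i + 2) % (m-1) < m - 1 := Nat.mod_lt _ (by omega)
    refine ⟨by omega, by omega, ?_⟩
    have heq : i + 2 = (i + 1) + 1 := by omega
    rw [heq]
    exact (mod_succ_ne (a := i+1) hs).symm
  · rw [if_neg hc, if_neg hc]
    set i := (if j = 1 then 0 else j - m + 1)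
    have h1 : (i + (m+2) - 1) % (m+2) < m + 2 := Nat.mod_lt _ (by omega)
    have h2 : (i + (m+2) - 2) % (m+2) < m + 2 := Nat.mod_lt _ (by omega)
    refine ⟨by omega, by omega, ?_⟩
    have heq : i + (m+2) - 1 = (i + (m+2) - 2) + 1 := by omega
    have := mod_succ_ne (a := i + (m+2) - 2) ht
    rw [heq]
    omega

lemma filter_ne_eq (α β : ℕ) (hα : α < n) (hβ : β < n) :
    (Finset.univ.filter (fun u : Fin n => u.val ≠ α ∧ u.val ≠ β))
      = Finset.univ \ {(⟨α, hα⟩ : Fin n), ⟨β, hβ⟩} := by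
  ext u
  simp [Fin.ext_iff, not_or, and_comm]

lemma card_N (α β : ℕ) (hα : α < n) (hβ : β < n) (hne : α ≠ β) :
    (Finset.univ.filter (fun u : Fin n => u.val ≠ α ∧ u.val ≠ β)).card = n - 2 := by
  rw [filter_ne_eq n α β hα hβ, Finset.card_sdiff_of_subset (Finset.subset_univ _)]
  rw [Finset.card_pair (by simp [Fin.ext_iff, hne])]
  simp

lemma onesIn_split (x : Fin n → Bool) (α β : ℕ) (hα : α < n) (hβ : β < n) (hne : α ≠ β) :
    onesIn (Finset.univ.filter (fun u : Fin n => u.val ≠ α ∧ u.val ≠ β)) x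
      + ((ext n x α).toNat + (ext n x β).toNat) = ones x := by
  classical
  rw [filter_ne_eq n α β hα hβ]
  set a : Fin n := ⟨α, hα⟩
  set b : Fin n := ⟨β, hβ⟩
  have hab : a ≠ b := by simp [a, b, Fin.ext_iff, hne]
  have hsub : ({a, b} : Finset (Fin n)) ⊆ Finset.univ := Finset.subset_univ _
  have hu : (Finset.univ \ {a, b}) ∪ {a, b} = Finset.univ := Finset.sdiff_union_of_subset hsub
  have hdisj : Disjoint (Finset.univ \ {a, b}) ({a,b} : Finset (Fin n)) := Finset.sdiff_disjoint
  unfold ones onesIn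
  have key : Finset.univ.filter (fun v => x v = true)
      = ((Finset.univ \ {a,b}).filter (fun v => x v = true))
        ∪ (({a,b} : Finset (Fin n)).filter (fun v => x v = true)) := by
    rw [← Finset.filter_union, hu]
  rw [key, Finset.card_union_of_disjoint (Finset.disjoint_filter_filter hdisj)]
  congr 1
  rw [ext, ext, dif_pos hα, dif_pos hβ]
  show (x a).toNat + (x b).toNat = _
  cases hxa : x a <;> cases hxb : x b <;>
    simp [Finset.filter_insert, Finset.filter_singleton, hxa, hxb, hab]

/-- master evaluation of the majority step. -/
lemma step_eval (hn : n = 2*m+1) (hm : 3 ≤ m) (x : Fin n → Bool) (v : Fin n) :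
    majStep (clrN n) x v
      = decide (m + (ext n x (eA m v.val)).toNat + (ext n x (eB m v.val)).toNat ≤ ones x) := by
  obtain ⟨hα, hβ, hne⟩ := e_facts n m hn hm v.val
  have hcard : (clrN n v).card = n - 2 := by
    rw [clrN_eq n m hn v]; exact card_N n _ _ hα hβ hne
  have hsplit := onesIn_split n x _ _ hα hβ hne
  rw [← clrN_eq n m hn v] at hsplit
  set o := onesIn (clrN n v) x with ho
  set ea := (ext n x (eA m v.val)).toNat
  set eb := (ext n x (eB m v.val)).toNat
  unfold majStep
  rw [hcard]
  rcases Nat.lt_or_ge o m with h | h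
  · rw [if_neg (by omega), if_pos (by omega)]
    have : ¬ (m + ea + eb ≤ ones x) := by omega
    simp [this]
  · rw [if_pos (by omega)]
    have : m + ea + eb ≤ ones x := by omega
    simp [this]

lemma step_boundary (hn : n = 2*m+1) (hm : 3 ≤ m) (x : Fin n → Bool)
    (hx : ones x = m + 1) (v : Fin n) :
    majStep (clrN n) x v = !(ext n x (eA m v.val) && ext n x (eB m v.val)) := by
  rw [step_eval n m hn hm x v, hx]
  cases hA : ext n x (eA m v.val) <;> cases hB : ext n x (eB m v.val) <;>
    simp <;> omega

lemma step_high (hn : n = 2*m+1) (hm : 3 ≤ m) (x : Fin n → Bool)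
    (hx : m + 2 ≤ ones x) (v : Fin n) :
    majStep (clrN n) x v = true := by
  rw [step_eval n m hn hm x v]
  have h1 : (ext n x (eA m v.val)).toNat ≤ 1 := by cases ext n x (eA m v.val) <;> simp
  have h2 : (ext n x (eB m v.val)).toNat ≤ 1 := by cases ext n x (eB m v.val) <;> simp
  simp only [decide_eq_true_eq]
  omega

/-! ### ones basics -/

lemma ones_eq_sum (x : Fin n → Bool) :
    ones x = ∑ j ∈ Finset.range n, (ext n x j).toNat := by
  unfold ones onesIn
  rw [Finset.card_filter, Finset.sum_range]
  apply Finset.sum_congr rfl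
  intro v _
  unfold ext
  rw [dif_pos v.isLt]
  cases hv : x v <;> simp [Fin.eta, hv]

lemma ones_add_zeros (x : Fin n → Bool) : ones x + zeros x = n := by
  unfold ones zeros onesIn
  classical
  have hd : Disjoint (Finset.univ.filter (fun v => x v = true))
      (Finset.univ.filter (fun v => x v = false)) := by
    rw [Finset.disjoint_filter]
    intro v _ hv
    simp [hv]
  rw [← Finset.card_union_of_disjoint hd]
  have hu : (Finset.univ.filter (fun v => x v = true)) ∪ (Finset.univ.filter (fun v => x v = false))
      = (Finset.univ : Finset (Fin n)) := by
    ext v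
    cases hv : x v <;> simp [hv]
  rw [hu, Finset.card_univ, Fintype.card_fin]

lemma ones_le (x : Fin n → Bool) : ones x ≤ n := by
  have := ones_add_zeros n x; omega

lemma ones_compl (x : Fin n → Bool) : ones (fun v => !(x v)) + ones x = n := by
  have h : ones (fun v => !(x v)) = zeros x := by
    unfold ones zeros onesIn
    congr 1
    ext v
    cases x v <;> simp
  rw [h]
  have := ones_add_zeros n x; omega

lemma zeros_eq (x : Fin n → Bool) : zeros x = n - ones x := by
  have := ones_add_zeros n x; omega

lemma step_compl (hn : n = 2*m+1) (hm : 3 ≤ m) (x : Fin n → Bool) (v : Fin n) :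
    majStep (clrN n) (fun u => !(x u)) v = !(majStep (clrN n) x v) := by
  obtain ⟨hα, hβ, -⟩ := e_facts n m hn hm v.val
  rw [step_eval n m hn hm _ v, step_eval n m hn hm x v]
  have hA : ext n (fun u => !(x u)) (eA m v.val) = !(ext n x (eA m v.val)) := by
    unfold ext; rw [dif_pos hα, dif_pos hα]
  have hB : ext n (fun u => !(x u)) (eB m v.val) = !(ext n x (eB m v.val)) := by
    unfold ext; rw [dif_pos hβ, dif_pos hβ]
  rw [hA, hB]
  have hc := ones_compl n x
  have hle := ones_le n x
  cases ext n x (eA m v.val) <;> cases ext n x (eB m v.val) <;>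
    simp only [Bool.not_true, Bool.not_false, Bool.toNat_true, Bool.toNat_false] <;>
    rw [← decide_not] <;> exact decide_eq_decide.mpr (by omega)

/-! ### node decomposition and cycle counting -/

def unode (i : ℕ) : ℕ := if i = 0 then 0 else i + 1
def rnode (i : ℕ) : ℕ := if i = 0 then 1 else m - 1 + i

lemma sum_split (hm : 3 ≤ m) (f : ℕ → ℕ) :
    ∑ j ∈ Finset.range (2*m+1), f j
      = (∑ i ∈ Finset.range (m-1), f (unode i))
        + ∑ i ∈ Finset.range (m+2), f (rnode m i) := by
  have e1 : ∑ j ∈ Finset.range (2*m+1), f j = ∑ j ∈ Finset.Ico 0 (2*m+1), f j := by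
    rw [Finset.range_eq_Ico]
  have e2 : ∑ i ∈ Finset.range (m-1), f (unode i)
      = f 0 + ∑ i ∈ Finset.Ico 1 (m-1), f (i+1) := by
    rw [Finset.range_eq_Ico, Finset.sum_eq_sum_Ico_succ_bot (by omega)]
    have h1 : unode 0 = 0 := rfl
    rw [h1]
    congr 1
    refine Finset.sum_congr rfl fun i hi => ?_
    rw [Finset.mem_Ico] at hi
    have h2 : unode i = i + 1 := if_neg (by omega)
    rw [h2]
  have e3 : ∑ i ∈ Finset.range (m+2), f (rnode m i)
      = f 1 + ∑ i ∈ Finset.Ico 1 (m+2), f (m-1+i) := by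
    rw [Finset.range_eq_Ico, Finset.sum_eq_sum_Ico_succ_bot (by omega)]
    have h1 : rnode m 0 = 1 := rfl
    rw [h1]
    congr 1
    refine Finset.sum_congr rfl fun i hi => ?_
    rw [Finset.mem_Ico] at hi
    have h2 : rnode m i = m - 1 + i := if_neg (by omega)
    rw [h2]
  have e4 : ∑ i ∈ Finset.Ico 1 (m-1), f (i+1) = ∑ j ∈ Finset.Ico 2 m, f j := by
    rw [Finset.sum_Ico_eq_sum_range, Finset.sum_Ico_eq_sum_range]
    refine Finset.sum_congr (by congr 1 <;> omega) fun k _ => ?_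
    congr 1 <;> omega
  have e5 : ∑ i ∈ Finset.Ico 1 (m+2), f (m-1+i) = ∑ j ∈ Finset.Ico m (2*m+1), f j := by
    rw [Finset.sum_Ico_eq_sum_range, Finset.sum_Ico_eq_sum_range]
    refine Finset.sum_congr (by congr 1 <;> omega) fun k _ => ?_
    congr 1 <;> omega
  rw [e1, e2, e3, e4, e5]
  rw [Finset.sum_eq_sum_Ico_succ_bot (show (0:ℕ) < 2*m+1 by omega),
    Finset.sum_eq_sum_Ico_succ_bot (show (1:ℕ) < 2*m+1 by omega)]
  rw [← Finset.sum_Ico_consecutive f (show 2 ≤ m by omega) (show m ≤ 2*m+1 by omega)]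
  omega

lemma e_unode (hm : 3 ≤ m) (i : ℕ) (hi : i < m-1) :
    eA m (unode i) = (i+1) % (m-1) ∧ eB m (unode i) = (i+2) % (m-1) := by
  by_cases h0 : i = 0
  · subst h0
    have h1 : unode 0 = 0 := rfl
    rw [h1]
    unfold eA eB
    norm_num
  · have hj : unode i = i + 1 := if_neg h0
    rw [hj]
    unfold eA eB
    have hc : (i+1 = 0 ∨ (2 ≤ i+1 ∧ i+1 ≤ m-1)) := by omega
    rw [if_pos hc, if_pos hc]
    constructor <;> (congr 1 <;> omega)

lemma e_rnode (hm : 3 ≤ m) (i : ℕ) (hi : i < m+2) :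
    eA m (rnode m i) = m - 1 + (i + (m+1)) % (m+2)
      ∧ eB m (rnode m i) = m - 1 + (i + m) % (m+2) := by
  by_cases h0 : i = 0
  · subst h0
    have h1 : rnode m 0 = 1 := rfl
    rw [h1]
    unfold eA eB
    have hc : ¬((1:ℕ) = 0 ∨ (2 ≤ 1 ∧ 1 ≤ m-1)) := by omega
    rw [if_neg hc, if_neg hc]
    constructor <;> (congr 1 <;> (try congr 1) <;> omega)
  · have hj0 : rnode m i = m - 1 + i := if_neg h0
    rw [hj0]
    unfold eA eB
    have hj : ¬(m - 1 + i = 0 ∨ (2 ≤ m-1+i ∧ m-1+i ≤ m-1)) := by omega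
    rw [if_neg hj, if_neg hj]
    have h1 : (if m - 1 + i = 1 then 0 else m - 1 + i - m + 1) = i := by
      rw [if_neg (by omega)]
      omega
    rw [h1]
    constructor <;> (congr 1 <;> (try congr 1) <;> omega)

def gS (x : Fin n → Bool) : ZMod (m-1) → Bool := fun i => ext n x i.val
def gT (x : Fin n → Bool) : ZMod (m+2) → Bool := fun i => ext n x (m - 1 + i.val)
def aS (x : Fin n → Bool) [NeZero (m-1)] : ℕ := ∑ i : ZMod (m-1), (gS n m x i).toNat
def bT (x : Fin n → Bool) [NeZero (m+2)] : ℕ := ∑ i : ZMod (m+2), (gT n m x i).toNat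
def PS (x : Fin n → Bool) [NeZero (m-1)] : ℕ :=
  ∑ i : ZMod (m-1), (gS n m x i && gS n m x (i+1)).toNat
def PT (x : Fin n → Bool) [NeZero (m+2)] : ℕ :=
  ∑ i : ZMod (m+2), (gT n m x i && gT n m x (i+1)).toNat

lemma val_add_nat {L : ℕ} [NeZero L] (i : ZMod L) (c : ℕ) :
    (i + (c : ZMod L)).val = (i.val + c) % L := by
  rw [ZMod.val_add, ZMod.val_natCast, Nat.add_mod_mod]

lemma ones_split (hn : n = 2*m+1) (hm : 3 ≤ m) [NeZero (m-1)] [NeZero (m+2)]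
    (x : Fin n → Bool) :
    aS n m x + bT n m x = ones x := by
  rw [ones_eq_sum]
  have hS : aS n m x = ∑ j ∈ Finset.range (m-1), (ext n x j).toNat := by
    unfold aS gS
    exact zmod_sum_val (L := m-1) (fun j => (ext n x j).toNat)
  have hT : bT n m x = ∑ j ∈ Finset.range (m+2), (ext n x (m-1+j)).toNat := by
    unfold bT gT
    exact zmod_sum_val (L := m+2) (fun j => (ext n x (m-1+j)).toNat)
  rw [hS, hT]
  subst hn
  have key : ∑ j ∈ Finset.Ico (m-1) (2*m+1), (ext (2*m+1) x j).toNat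
      = ∑ j ∈ Finset.range (m+2), (ext (2*m+1) x (m-1+j)).toNat := by
    rw [Finset.sum_Ico_eq_sum_range]
    exact Finset.sum_congr (by congr 1 <;> omega) fun k _ => rfl
  rw [← key]
  simp only [Finset.range_eq_Ico]
  exact Finset.sum_Ico_consecutive _ (by omega) (by omega)

/-! ### bridging node sums to cycle sums -/

lemma gS_add [NeZero (m-1)] (x : Fin n → Bool) (i : ZMod (m-1)) (c : ℕ) :
    gS n m x (i + (c : ZMod (m-1))) = ext n x ((i.val + c) % (m-1)) := by
  unfold gS
  rw [val_add_nat]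

lemma gT_add [NeZero (m+2)] (x : Fin n → Bool) (i : ZMod (m+2)) (c : ℕ) :
    gT n m x (i + (c : ZMod (m+2))) = ext n x (m - 1 + (i.val + c) % (m+2)) := by
  unfold gT
  rw [val_add_nat]

lemma gS_coe [NeZero (m-1)] (x : Fin n → Bool) (j : ℕ) (hj : j < m-1) :
    gS n m x ((j : ZMod (m-1))) = ext n x j := by
  unfold gS
  rw [ZMod.val_natCast, Nat.mod_eq_of_lt hj]

lemma gT_coe [NeZero (m+2)] (x : Fin n → Bool) (j : ℕ) (hj : j < m+2) :
    gT n m x ((j : ZMod (m+2))) = ext n x (m - 1 + j) := by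
  unfold gT
  rw [ZMod.val_natCast, Nat.mod_eq_of_lt hj]

lemma BU_eq (hm : 3 ≤ m) [NeZero (m-1)] (x : Fin n → Bool) :
    ∑ i ∈ Finset.range (m-1),
        (ext n x ((i+1) % (m-1)) && ext n x ((i+2) % (m-1))).toNat
      = PS n m x := by
  rw [← zmod_sum_val (L := m-1)
    (fun j => (ext n x ((j+1) % (m-1)) && ext n x ((j+2) % (m-1))).toNat)]
  unfold PS
  have step : ∀ i : ZMod (m-1),
      (ext n x ((i.val+1) % (m-1)) && ext n x ((i.val+2) % (m-1))).toNat
        = (gS n m x (i+1) && gS n m x ((i+1)+1)).toNat := by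
    intro i
    have e1 : (i + 1) = i + ((1:ℕ) : ZMod (m-1)) := by norm_cast
    have e2 : ((i + 1) + 1) = i + ((2:ℕ) : ZMod (m-1)) := by push_cast; ring
    rw [e2, e1, gS_add, gS_add]
  calc ∑ i : ZMod (m-1), (ext n x ((i.val+1) % (m-1)) && ext n x ((i.val+2) % (m-1))).toNat
      = ∑ i : ZMod (m-1), (gS n m x (i+1) && gS n m x ((i+1)+1)).toNat :=
        Finset.sum_congr rfl (fun i _ => step i)
    _ = ∑ i : ZMod (m-1), (gS n m x i && gS n m x (i+1)).toNat :=
        Fintype.sum_equiv (Equiv.addRight (1 : ZMod (m-1))) _ _ (fun i => rfl)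

lemma BR_eq (hm : 3 ≤ m) [NeZero (m+2)] (x : Fin n → Bool) :
    ∑ i ∈ Finset.range (m+2),
        (ext n x (m - 1 + (i+(m+1)) % (m+2)) && ext n x (m - 1 + (i+m) % (m+2))).toNat
      = PT n m x := by
  rw [← zmod_sum_val (L := m+2)
    (fun j => (ext n x (m - 1 + (j+(m+1)) % (m+2)) && ext n x (m - 1 + (j+m) % (m+2))).toNat)]
  unfold PT
  have step : ∀ i : ZMod (m+2),
      (ext n x (m - 1 + (i.val+(m+1)) % (m+2)) && ext n x (m - 1 + (i.val+m) % (m+2))).toNat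
        = (gT n m x ((i + (m : ZMod (m+2)))+1) && gT n m x (i + (m : ZMod (m+2)))).toNat := by
    intro i
    have e1 : ((i + (m : ZMod (m+2))) + 1) = i + (((m+1:ℕ)) : ZMod (m+2)) := by push_cast; ring
    have e2 : (i + (m : ZMod (m+2))) = i + (((m:ℕ)) : ZMod (m+2)) := by norm_cast
    rw [e1, e2, gT_add, gT_add]
  calc ∑ i : ZMod (m+2), (ext n x (m - 1 + (i.val+(m+1)) % (m+2)) && ext n x (m - 1 + (i.val+m) % (m+2))).toNat
      = ∑ i : ZMod (m+2), (gT n m x ((i + (m : ZMod (m+2)))+1) && gT n m x (i + (m : ZMod (m+2)))).toNat :=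
        Finset.sum_congr rfl (fun i _ => step i)
    _ = ∑ i : ZMod (m+2), (gT n m x (i+1) && gT n m x i).toNat :=
        Fintype.sum_equiv (Equiv.addRight ((m : ZMod (m+2)))) _ _ (fun i => rfl)
    _ = ∑ i : ZMod (m+2), (gT n m x i && gT n m x (i+1)).toNat := by
        refine Finset.sum_congr rfl fun i _ => ?_
        rw [Bool.and_comm]

lemma zeros_F (hn : n = 2*m+1) (hm : 3 ≤ m) [NeZero (m-1)] [NeZero (m+2)]
    (x : Fin n → Bool) (hx : ones x = m+1) :
    zeros (majStep (clrN n) x) = PS n m x + PT n m x := by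
  unfold zeros
  have hset : Finset.univ.filter (fun v => majStep (clrN n) x v = false)
      = Finset.univ.filter
        (fun v : Fin n => (ext n x (eA m v.val) && ext n x (eB m v.val)) = true) := by
    ext v
    rw [Finset.mem_filter, Finset.mem_filter, step_boundary n m hn hm x hx v]
    cases (ext n x (eA m v.val) && ext n x (eB m v.val)) <;> simp
  rw [hset, Finset.card_filter, ← Finset.sum_range
    (fun j => if (ext n x (eA m j) && ext n x (eB m j)) = true then 1 else 0)]
  have hsum : ∀ j : ℕ, (if (ext n x (eA m j) && ext n x (eB m j)) = true then 1 else 0)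
      = (ext n x (eA m j) && ext n x (eB m j)).toNat := by
    intro j
    cases (ext n x (eA m j) && ext n x (eB m j)) <;> simp
  rw [Finset.sum_congr rfl (fun j _ => hsum j)]
  have hrange : Finset.range n = Finset.range (2*m+1) := by rw [hn]
  rw [hrange, sum_split m hm]
  congr 1
  · rw [← BU_eq n m hm x]
    refine Finset.sum_congr rfl fun i hi => ?_
    rw [Finset.mem_range] at hi
    rw [(e_unode m hm i hi).1, (e_unode m hm i hi).2]
  · rw [← BR_eq n m hm x]
    refine Finset.sum_congr rfl fun i hi => ?_
    rw [Finset.mem_range] at hi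
    rw [(e_rnode m hm i hi).1, (e_rnode m hm i hi).2]

/-! ### bounds -/

lemma aS_le (hm : 3 ≤ m) [NeZero (m-1)] (x : Fin n → Bool) : aS n m x ≤ m - 1 := by
  unfold aS
  calc ∑ i : ZMod (m-1), (gS n m x i).toNat ≤ ∑ _i : ZMod (m-1), 1 :=
        Finset.sum_le_sum (fun i _ => by cases gS n m x i <;> simp)
    _ = m - 1 := by simp [Finset.card_univ, ZMod.card]

lemma bT_top [NeZero (m+2)] (x : Fin n → Bool) (h : ∀ i, gT n m x i = true) :
    bT n m x = m + 2 := by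
  unfold bT
  rw [Finset.sum_congr rfl (fun i _ => by simp [h i] : ∀ i ∈ Finset.univ, (gT n m x i).toNat = 1)]
  simp [Finset.card_univ, ZMod.card]

lemma bT_bot [NeZero (m+2)] (x : Fin n → Bool) (h : ∀ i, gT n m x i = false) :
    bT n m x = 0 := by
  unfold bT
  rw [Finset.sum_congr rfl (fun i _ => by simp [h i] : ∀ i ∈ Finset.univ, (gT n m x i).toNat = 0)]
  simp

lemma aS_top [NeZero (m-1)] (x : Fin n → Bool) (h : ∀ i, gS n m x i = true) :
    aS n m x = m - 1 := by
  unfold aS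
  rw [Finset.sum_congr rfl (fun i _ => by simp [h i] : ∀ i ∈ Finset.univ, (gS n m x i).toNat = 1)]
  simp [Finset.card_univ, ZMod.card]

lemma PT_lt [NeZero (m+2)] (x : Fin n → Bool) (h1 : 1 ≤ bT n m x) (h2 : bT n m x ≤ m+1) :
    PT n m x ≤ bT n m x - 1 := by
  have hle : PT n m x ≤ bT n m x := cyc_le (gT n m x)
  rcases Nat.lt_or_ge (PT n m x) (bT n m x) with h | h
  · omega
  · exfalso
    have heq : PT n m x = bT n m x := by omega
    rcases cyc_eq (gT n m x) heq with hall | hall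
    · have := bT_top n m x hall; omega
    · have := bT_bot n m x hall; omega

/-! ### families -/

def SZeros (x : Fin n → Bool) : Prop := ∀ j, j < m - 1 → ext n x j = false
def SOnes (x : Fin n → Bool) : Prop := ∀ j, j < m - 1 → ext n x j = true
def TPair [NeZero (m+2)] (x : Fin n → Bool) (p : ZMod (m+2)) : Prop :=
  ∀ j : ZMod (m+2), gT n m x j = true ↔ (j = p ∨ j = p + 1)
def TZero [NeZero (m+2)] (x : Fin n → Bool) (q : ZMod (m+2)) : Prop :=
  ∀ j : ZMod (m+2), gT n m x j = false ↔ j = q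
def Fam [NeZero (m+2)] (x : Fin n → Bool) : Prop :=
  SZeros n m x ∨ (SOnes n m x ∧ ∃ p, TPair n m x p)

lemma one_ne_zero' (hm : 3 ≤ m) : (1 : ZMod (m+2)) ≠ 0 := by
  haveI : NeZero (m+2) := ⟨by omega⟩
  intro h
  haveI : Fact (1 < m+2) := ⟨by omega⟩
  have h1 : (1 : ZMod (m+2)).val = 1 := ZMod.val_one _
  rw [h] at h1
  simp at h1

lemma two_ne_zero' (hm : 3 ≤ m) : (2 : ZMod (m+2)) ≠ 0 := by
  haveI : NeZero (m+2) := ⟨by omega⟩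
  intro h
  have h1 : (2 : ZMod (m+2)).val = 2 := by
    rw [show ((2 : ZMod (m+2))) = ((2:ℕ) : ZMod (m+2)) by norm_cast, ZMod.val_natCast,
      Nat.mod_eq_of_lt (by omega)]
  rw [h] at h1
  simp at h1

/-- K3 : ones does not drop below m+1. -/
lemma ones_step_ge (hn : n = 2*m+1) (hm : 3 ≤ m) [NeZero (m-1)] [NeZero (m+2)]
    (x : Fin n → Bool) (hx : ones x = m+1) :
    m + 1 ≤ ones (majStep (clrN n) x) := by
  have hz := zeros_F n m hn hm x hx
  have hsplit := ones_split n m hn hm x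
  have haS := aS_le n m hm x
  have hPS : PS n m x ≤ aS n m x := cyc_le (gS n m x)
  have hbT1 : 1 ≤ bT n m x := by omega
  have hbT2 : bT n m x ≤ m + 1 := by omega
  have hPT := PT_lt n m x hbT1 hbT2
  have htot := ones_add_zeros n (majStep (clrN n) x)
  omega

/-- K4 : characterization of the equality case. -/
lemma fam_of_eq (hn : n = 2*m+1) (hm : 3 ≤ m) [NeZero (m-1)] [NeZero (m+2)]
    (x : Fin n → Bool) (hx : ones x = m+1)
    (hy : ones (majStep (clrN n) x) = m+1) : Fam n m x := by
  have hz := zeros_F n m hn hm x hx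
  have hsplit := ones_split n m hn hm x
  have haS := aS_le n m hm x
  have hPS : PS n m x ≤ aS n m x := cyc_le (gS n m x)
  have hbT1 : 1 ≤ bT n m x := by omega
  have hbT2 : bT n m x ≤ m + 1 := by omega
  have hPT := PT_lt n m x hbT1 hbT2
  have htot := ones_add_zeros n (majStep (clrN n) x)
  have hPSeq : PS n m x = aS n m x := by omega
  rcases cyc_eq (gS n m x) hPSeq with hall | hall
  · -- S all ones : family A
    right
    refine ⟨fun j hj => by rw [← gS_coe n m x j hj]; exact hall _, ?_⟩
    have haSv : aS n m x = m - 1 := aS_top n m x hall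
    have hPTv : PT n m x = 1 := by omega
    have hbTv : bT n m x = 2 := by omega
    have hne0 : PT n m x ≠ 0 := by omega
    unfold PT at hne0
    obtain ⟨i0, -, hi0⟩ := Finset.exists_ne_zero_of_sum_ne_zero hne0
    have hboth : gT n m x i0 = true ∧ gT n m x (i0+1) = true := by
      cases h1 : gT n m x i0 <;> cases h2 : gT n m x (i0+1) <;>
        rw [h1, h2] at hi0 <;> simp_all
    have hne : i0 ≠ i0 + 1 := by
      intro h
      exact one_ne_zero' m hm (left_eq_add.mp h)
    refine ⟨i0, ?_⟩
    have hTcard : (Finset.univ.filter (fun j => gT n m x j = true)).card = bT n m x := by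
      unfold bT
      rw [Finset.card_filter]
      refine Finset.sum_congr rfl fun j _ => ?_
      cases gT n m x j <;> simp
    have hss : ({i0, i0+1} : Finset (ZMod (m+2))) ⊆
        Finset.univ.filter (fun j => gT n m x j = true) := by
      intro j hj
      rw [Finset.mem_insert, Finset.mem_singleton] at hj
      rcases hj with rfl | rfl <;> simp [hboth.1, hboth.2]
    have hcard2 : ({i0, i0+1} : Finset (ZMod (m+2))).card = 2 := by
      rw [Finset.card_insert_of_notMem (by simp [hne]), Finset.card_singleton]
    have heq : Finset.univ.filter (fun j => gT n m x j = true) = {i0, i0+1} :=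
      (Finset.eq_of_subset_of_card_le hss (by omega)).symm
    intro j
    constructor
    · intro hjt
      have hmem : j ∈ Finset.univ.filter (fun j => gT n m x j = true) := by simp [hjt]
      rw [heq] at hmem
      simpa using hmem
    · rintro (rfl | rfl)
      exacts [hboth.1, hboth.2]
  · -- S all zeros : family B
    left
    intro j hj
    rw [← gS_coe n m x j hj]
    exact hall _

/-! ### image computations -/

lemma ext_lt (y : Fin n → Bool) {j : ℕ} (hj : j < n) : ext n y j = y ⟨j, hj⟩ := dif_pos hj

lemma coe_val {L : ℕ} [NeZero L] (a : ZMod L) : ((a.val : ℕ) : ZMod L) = a := by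
  rw [ZMod.natCast_val, ZMod.cast_id]

lemma bool_eq_decide {b : Bool} {P : Prop} [Decidable P] (h : b = true ↔ P) :
    b = decide P := by
  cases b
  · simp only [Bool.false_eq_true, false_iff] at h
    simp [h]
  · simp only [true_iff] at h
    simp [h]

lemma unode_lt (hn : n = 2*m+1) (hm : 3 ≤ m) {i : ℕ} (hi : i < m-1) : unode i < n := by
  unfold unode; split <;> omega

lemma rnode_lt (hn : n = 2*m+1) (hm : 3 ≤ m) {i : ℕ} (hi : i < m+2) : rnode m i < n := by
  unfold rnode; split <;> omega

lemma F_unode (hn : n = 2*m+1) (hm : 3 ≤ m) (x : Fin n → Bool) (hx : ones x = m+1)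
    {i : ℕ} (hi : i < m-1) :
    ext n (majStep (clrN n) x) (unode i)
      = !(ext n x ((i+1) % (m-1)) && ext n x ((i+2) % (m-1))) := by
  rw [ext_lt n _ (unode_lt n m hn hm hi),
    step_boundary n m hn hm x hx ⟨unode i, unode_lt n m hn hm hi⟩]
  have h1 : (⟨unode i, unode_lt n m hn hm hi⟩ : Fin n).val = unode i := rfl
  rw [h1, (e_unode m hm i hi).1, (e_unode m hm i hi).2]

lemma cast_msucc (hm : 3 ≤ m) : (((m+1:ℕ)) : ZMod (m+2)) = -1 := by
  haveI : NeZero (m+2) := ⟨by omega⟩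
  have h0 : ((m+2:ℕ) : ZMod (m+2)) = 0 := ZMod.natCast_self _
  have h1 : ((m+1:ℕ) : ZMod (m+2)) + 1 = 0 := by
    rw [← h0]; push_cast; ring
  exact eq_neg_of_add_eq_zero_left h1

lemma cast_m (hm : 3 ≤ m) : (((m:ℕ)) : ZMod (m+2)) = -2 := by
  haveI : NeZero (m+2) := ⟨by omega⟩
  have h0 : ((m+2:ℕ) : ZMod (m+2)) = 0 := ZMod.natCast_self _
  have h1 : ((m:ℕ) : ZMod (m+2)) + 2 = 0 := by
    rw [← h0]; push_cast; ring
  exact eq_neg_of_add_eq_zero_left h1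

lemma F_rnode (hn : n = 2*m+1) (hm : 3 ≤ m) [NeZero (m+2)] (x : Fin n → Bool)
    (hx : ones x = m+1) {i : ℕ} (hi : i < m+2) :
    ext n (majStep (clrN n) x) (rnode m i)
      = !(gT n m x ((i : ZMod (m+2)) - 1) && gT n m x ((i : ZMod (m+2)) - 2)) := by
  rw [ext_lt n _ (rnode_lt n m hn hm hi),
    step_boundary n m hn hm x hx ⟨rnode m i, rnode_lt n m hn hm hi⟩]
  have h0 : (⟨rnode m i, rnode_lt n m hn hm hi⟩ : Fin n).val = rnode m i := rfl
  rw [h0, (e_rnode m hm i hi).1, (e_rnode m hm i hi).2]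
  have hA : ext n x (m - 1 + (i+(m+1)) % (m+2)) = gT n m x ((i : ZMod (m+2)) - 1) := by
    have := gT_add n m x ((i : ZMod (m+2))) (m+1)
    rw [ZMod.val_natCast, Nat.mod_eq_of_lt hi] at this
    rw [← this, cast_msucc m hm, sub_eq_add_neg]
  have hB : ext n x (m - 1 + (i+m) % (m+2)) = gT n m x ((i : ZMod (m+2)) - 2) := by
    have := gT_add n m x ((i : ZMod (m+2))) m
    rw [ZMod.val_natCast, Nat.mod_eq_of_lt hi] at this
    rw [← this, cast_m m hm, sub_eq_add_neg]
  rw [hA, hB]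

/-- unique zero position for family B members. -/
lemma B_unique (hn : n = 2*m+1) (hm : 3 ≤ m) [NeZero (m-1)] [NeZero (m+2)]
    (x : Fin n → Bool) (hx : ones x = m+1) (hS : SZeros n m x) :
    ∃ q, TZero n m x q := by
  have haS : aS n m x = 0 := by
    unfold aS
    refine Finset.sum_eq_zero fun i _ => ?_
    have : gS n m x i = false := by
      unfold gS
      exact hS i.val (ZMod.val_lt i)
    simp [this]
  have hbT : bT n m x = m + 1 := by
    have := ones_split n m hn hm x
    omega
  have hTcard : (Finset.univ.filter (fun j => gT n m x j = true)).card = m+1 := by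
    rw [← hbT]
    unfold bT
    rw [Finset.card_filter]
    refine Finset.sum_congr rfl fun j _ => ?_
    cases gT n m x j <;> simp
  have hZT : (Finset.univ.filter (fun j => gT n m x j = false))
      = Finset.univ \ (Finset.univ.filter (fun j => gT n m x j = true)) := by
    ext j
    cases h : gT n m x j <;> simp [h]
  have hZcard : (Finset.univ.filter (fun j => gT n m x j = false)).card = 1 := by
    rw [hZT, Finset.card_sdiff_of_subset (Finset.subset_univ _), hTcard, Finset.card_univ, ZMod.card]
    omega
  obtain ⟨q0, hq⟩ := Finset.card_eq_one.mp hZcard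
  refine ⟨q0, fun j => ?_⟩
  constructor
  · intro hj
    have hmem : j ∈ Finset.univ.filter (fun j => gT n m x j = false) := by simp [hj]
    rw [hq] at hmem
    simpa using hmem
  · intro hj
    rw [hj]
    have hmem : q0 ∈ Finset.univ.filter (fun j => gT n m x j = false) := by
      rw [hq]; simp
    simpa using hmem

lemma image_B (hn : n = 2*m+1) (hm : 3 ≤ m) [NeZero (m+2)]
    (x : Fin n → Bool) (hx : ones x = m+1) (hS : SZeros n m x)
    (q : ZMod (m+2)) (hq : TZero n m x q) :
    (∀ i, i < m-1 → ext n (majStep (clrN n) x) (unode i) = true)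
    ∧ (∀ i, i < m+2 → ext n (majStep (clrN n) x) (rnode m i)
        = decide ((i : ZMod (m+2)) = q+1 ∨ (i : ZMod (m+2)) = q+2)) := by
  constructor
  · intro i hi
    rw [F_unode n m hn hm x hx hi]
    simp [hS ((i+1) % (m-1)) (Nat.mod_lt _ (by omega))]
  · intro i hi
    rw [F_rnode n m hn hm x hx hi]
    set i' : ZMod (m+2) := (i : ZMod (m+2))
    have h1 : gT n m x (i' - 1) = decide (¬ (i' - 1 = q)) := by
      refine bool_eq_decide ?_
      rw [← Bool.not_eq_false, not_iff_not]
      exact hq (i' - 1)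
    have h2 : gT n m x (i' - 2) = decide (¬ (i' - 2 = q)) := by
      refine bool_eq_decide ?_
      rw [← Bool.not_eq_false, not_iff_not]
      exact hq (i' - 2)
    rw [h1, h2]
    have e1 : (i' - 1 = q) ↔ i' = q + 1 := by rw [sub_eq_iff_eq_add]
    have e2 : (i' - 2 = q) ↔ i' = q + 2 := by rw [sub_eq_iff_eq_add]
    by_cases hc1 : i' = q + 1 <;> by_cases hc2 : i' = q + 2 <;>
      simp [e1, e2, hc1, hc2]

lemma image_A (hn : n = 2*m+1) (hm : 3 ≤ m) [NeZero (m+2)]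
    (x : Fin n → Bool) (hx : ones x = m+1) (hS : SOnes n m x)
    (p : ZMod (m+2)) (hp : TPair n m x p) :
    (∀ i, i < m-1 → ext n (majStep (clrN n) x) (unode i) = false)
    ∧ (∀ i, i < m+2 → ext n (majStep (clrN n) x) (rnode m i)
        = !decide ((i : ZMod (m+2)) = p+2)) := by
  constructor
  · intro i hi
    rw [F_unode n m hn hm x hx hi]
    simp [hS ((i+1) % (m-1)) (Nat.mod_lt _ (by omega)),
      hS ((i+2) % (m-1)) (Nat.mod_lt _ (by omega))]
  · intro i hi
    rw [F_rnode n m hn hm x hx hi]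
    set i' : ZMod (m+2) := (i : ZMod (m+2))
    rw [bool_eq_decide (hp (i' - 1)), bool_eq_decide (hp (i' - 2))]
    have key : ((i' - 1 = p ∨ i' - 1 = p + 1) ∧ (i' - 2 = p ∨ i' - 2 = p + 1))
        ↔ i' = p + 2 := by
      constructor
      · rintro ⟨h1, h2⟩
        rcases h2 with h2 | h2
        · rw [sub_eq_iff_eq_add] at h2
          exact h2
        · exfalso
          rw [sub_eq_iff_eq_add] at h2
          rcases h1 with h1 | h1 <;> rw [sub_eq_iff_eq_add] at h1 <;> rw [h2] at h1
          · refine two_ne_zero' m hm ?_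
            calc (2 : ZMod (m+2)) = (p + 1 + 2) - (p + 1) := by ring
              _ = 0 := by rw [h1]; ring
          · refine one_ne_zero' m hm ?_
            calc (1 : ZMod (m+2)) = (p + 1 + 2) - (p + 1 + 1) := by ring
              _ = 0 := by rw [h1]; ring
      · intro h
        constructor
        · right; rw [h]; ring
        · left; rw [h]; ring
    rw [show (decide (i' - 1 = p ∨ i' - 1 = p + 1) && decide (i' - 2 = p ∨ i' - 2 = p + 1))
        = decide ((i' - 1 = p ∨ i' - 1 = p + 1) ∧ (i' - 2 = p ∨ i' - 2 = p + 1)) by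
      simp]
    rw [decide_eq_decide.mpr key]

lemma not_fam_01 (hm : 3 ≤ m) [NeZero (m+2)] (y : Fin n → Bool)
    (h0 : ext n y 0 ≠ ext n y 1) : ¬ Fam n m y := by
  rintro (hB | ⟨hA, -⟩)
  · exact h0 (by rw [hB 0 (by omega), hB 1 (by omega)])
  · exact h0 (by rw [hA 0 (by omega), hA 1 (by omega)])

lemma K5 (hn : n = 2*m+1) (hm : 3 ≤ m) [NeZero (m-1)] [NeZero (m+2)]
    (x : Fin n → Bool) (hx : ones x = m+1)
    (hx1 : ones (majStep (clrN n) x) = m+1)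
    (hfx : Fam n m x) (hfy : Fam n m (majStep (clrN n) x)) :
    ¬ Fam n m (majStep (clrN n) (majStep (clrN n) x)) := by
  have hu0 : unode 0 = 0 := rfl
  have hr0 : rnode m 0 = 1 := rfl
  have h1z : (1 : ZMod (m+2)) ≠ 0 := one_ne_zero' m hm
  have h2z : (2 : ZMod (m+2)) ≠ 0 := two_ne_zero' m hm
  rcases hfx with hB | ⟨hA, p, hp⟩
  · -- x is a B-form configuration
    obtain ⟨q, hq⟩ := B_unique n m hn hm x hx hB
    obtain ⟨hU, hR⟩ := image_B n m hn hm x hx hB q hq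
    have hy0 : ext n (majStep (clrN n) x) 0 = true := by
      rw [← hu0]; exact hU 0 (by omega)
    have hy1 : ext n (majStep (clrN n) x) 1
        = decide ((0:ZMod (m+2)) = q+1 ∨ (0:ZMod (m+2)) = q+2) := by
      show ext n _ (rnode m 0) = _
      have h := hR 0 (by omega)
      simpa using h
    have hcase : (0:ZMod (m+2)) = q+1 ∨ (0:ZMod (m+2)) = q+2 := by
      by_contra hcon
      refine not_fam_01 n m hm _ ?_ hfy
      rw [hy0, hy1, decide_eq_false hcon]
      simp
    have hSOnes : SOnes n m (majStep (clrN n) x) := by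
      intro j hj
      have hj01 : j = 0 ∨ j = 1 ∨ 2 ≤ j := by omega
      rcases hj01 with rfl | rfl | hj2
      · exact hy0
      · rw [hy1, decide_eq_true hcase]
      · have hju : unode (j-1) = j := by
          unfold unode; rw [if_neg (by omega)]; omega
        rw [← hju]; exact hU (j-1) (by omega)
    have hTprof : ∀ jz : ZMod (m+2),
        (gT n m (majStep (clrN n) x) jz = true ↔ (jz = 0 ∨ jz = q+1 ∨ jz = q+2)) := by
      intro jz
      rcases Nat.eq_zero_or_pos jz.val with h0 | h0
      · have hjz : jz = 0 := by rwa [← ZMod.val_eq_zero]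
        have hnode : m - 1 + jz.val = unode (m-2) := by
          unfold unode; rw [if_neg (by omega)]; omega
        unfold gT
        rw [hnode, hU (m-2) (by omega)]
        simp [hjz]
      · have hnode : m - 1 + jz.val = rnode m jz.val := by
          unfold rnode; rw [if_neg (by omega)]
        have hjz0 : jz ≠ 0 := by
          intro h; rw [h] at h0; simp [ZMod.val_zero] at h0
        unfold gT
        rw [hnode, hR jz.val (ZMod.val_lt jz), coe_val]
        rw [decide_eq_true_eq]
        constructor
        · exact Or.inr
        · rintro (h | h)
          · exact absurd h hjz0
          · exact h
    rcases hcase with hq1 | hq2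
    · -- q+1 = 0 : F x is A-form with p' = 0
      have e1 : q + 1 = 0 := hq1.symm
      have e2 : q + 2 = (0 : ZMod (m+2)) + 1 := by
        rw [show q + 2 = (q+1) + 1 by ring, e1]
      have hp' : TPair n m (majStep (clrN n) x) 0 := by
        intro jz
        rw [hTprof jz, e1, e2]
        tauto
      obtain ⟨hU2, hR2⟩ := image_A n m hn hm _ hx1 hSOnes 0 hp'
      refine not_fam_01 n m hm _ ?_
      have hz0 : ext n (majStep (clrN n) (majStep (clrN n) x)) 0 = false := by
        rw [← hu0]; exact hU2 0 (by omega)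
      have hz1 : ext n (majStep (clrN n) (majStep (clrN n) x)) 1
          = !decide ((0:ZMod (m+2)) = 0 + 2) := by
        show ext n _ (rnode m 0) = _
        have h := hR2 0 (by omega)
        simpa using h
      rw [hz0, hz1, decide_eq_false (by rw [zero_add]; exact fun h => h2z h.symm)]
      simp
    · -- q+2 = 0 : F x is A-form with p' = q+1
      have hp' : TPair n m (majStep (clrN n) x) (q+1) := by
        intro jz
        rw [hTprof jz]
        have e2 : (q + 1) + 1 = q + 2 := by ring
        rw [e2]
        constructor
        · rintro (h | h | h)
          · right; rw [h, hq2]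
          · left; exact h
          · right; exact h
        · rintro (h | h)
          · right; left; exact h
          · right; right; exact h
      obtain ⟨hU2, hR2⟩ := image_A n m hn hm _ hx1 hSOnes (q+1) hp'
      refine not_fam_01 n m hm _ ?_
      have hz0 : ext n (majStep (clrN n) (majStep (clrN n) x)) 0 = false := by
        rw [← hu0]; exact hU2 0 (by omega)
      have hz1 : ext n (majStep (clrN n) (majStep (clrN n) x)) 1
          = !decide ((0:ZMod (m+2)) = (q+1) + 2) := by
        show ext n _ (rnode m 0) = _
        have h := hR2 0 (by omega)
        simpa using h
      have hne : ¬ ((0:ZMod (m+2)) = (q+1) + 2) := by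
        intro h
        apply h1z
        have e3 : (q+1) + 2 = (q + 2) + 1 := by ring
        rw [e3, ← hq2, zero_add] at h
        exact h.symm
      rw [hz0, hz1, decide_eq_false hne]
      simp
  · -- x is an A-form configuration
    obtain ⟨hU, hR⟩ := image_A n m hn hm x hx hA p hp
    have hy0 : ext n (majStep (clrN n) x) 0 = false := by
      rw [← hu0]; exact hU 0 (by omega)
    have hy1 : ext n (majStep (clrN n) x) 1
        = !decide ((0:ZMod (m+2)) = p+2) := by
      show ext n _ (rnode m 0) = _
      have h := hR 0 (by omega)
      simpa using h
    rcases hfy with hB' | ⟨hA', -⟩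
    swap
    · exact absurd (hA' 0 (by omega)) (by rw [hy0]; simp)
    have hy1f : ext n (majStep (clrN n) x) 1 = false := hB' 1 (by omega)
    have h02 : (0:ZMod (m+2)) = p + 2 := by
      by_contra hcon
      rw [hy1, decide_eq_false hcon] at hy1f
      simp at hy1f
    have hTZ : TZero n m (majStep (clrN n) x) 0 := by
      intro jz
      rcases Nat.eq_zero_or_pos jz.val with h0 | h0
      · have hjz : jz = 0 := by rwa [← ZMod.val_eq_zero]
        have hnode : m - 1 + jz.val = unode (m-2) := by
          unfold unode; rw [if_neg (by omega)]; omega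
        unfold gT
        rw [hnode, hU (m-2) (by omega)]
        simp [hjz]
      · have hnode : m - 1 + jz.val = rnode m jz.val := by
          unfold rnode; rw [if_neg (by omega)]
        have hjz0 : jz ≠ 0 := by
          intro h; rw [h] at h0; simp [ZMod.val_zero] at h0
        unfold gT
        rw [hnode, hR jz.val (ZMod.val_lt jz), coe_val]
        rw [← h02]
        rw [decide_eq_false hjz0]
        simp [hjz0]
    obtain ⟨hU2, hR2⟩ := image_B n m hn hm _ hx1 hB' 0 hTZ
    refine not_fam_01 n m hm _ ?_
    have hz0 : ext n (majStep (clrN n) (majStep (clrN n) x)) 0 = true := by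
      rw [← hu0]; exact hU2 0 (by omega)
    have hz1 : ext n (majStep (clrN n) (majStep (clrN n) x)) 1
        = decide ((0:ZMod (m+2)) = 0+1 ∨ (0:ZMod (m+2)) = 0+2) := by
      show ext n _ (rnode m 0) = _
      have h := hR2 0 (by omega)
      simpa using h
    have hne : ¬ ((0:ZMod (m+2)) = 0+1 ∨ (0:ZMod (m+2)) = 0+2) := by
      rintro (h | h)
      · exact h1z (by rw [zero_add] at h; exact h.symm)
      · exact h2z (by rw [zero_add] at h; exact h.symm)
    rw [hz0, hz1, decide_eq_false hne]
    simp

/-! ### assembly -/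

lemma ones_top (hn : n = 2*m+1) : ones (fun _ => true : Fin n → Bool) = n := by
  unfold ones onesIn
  simp

lemma pos_case (hn : n = 2*m+1) (hm : 3 ≤ m) (x : Fin n → Bool) (hx : m+1 ≤ ones x) :
    (majStep (clrN n))^[4] x = fun _ => true := by
  haveI : NeZero (m-1) := ⟨by omega⟩
  haveI : NeZero (m+2) := ⟨by omega⟩
  have hit : (majStep (clrN n))^[4] x
      = majStep (clrN n) (majStep (clrN n) (majStep (clrN n) (majStep (clrN n) x))) := by
    rw [show (4:ℕ) = 3+1 from rfl, Function.iterate_succ_apply',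
      show (3:ℕ) = 2+1 from rfl, Function.iterate_succ_apply',
      show (2:ℕ) = 1+1 from rfl, Function.iterate_succ_apply',
      Function.iterate_one]
  rw [hit]
  have htop : ∀ y : Fin n → Bool, m + 2 ≤ ones y → majStep (clrN n) y = fun _ => true :=
    fun y hy => funext fun v => step_high n m hn hm y hy v
  have hfix : majStep (clrN n) (fun _ => true) = (fun _ => true : Fin n → Bool) :=
    htop _ (by rw [ones_top n m hn]; omega)
  rcases Nat.lt_or_ge (ones x) (m+2) with h1 | h1
  swap
  · rw [htop x h1, hfix, hfix, hfix]
  have hx1 : ones x = m+1 := by omega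
  have hge1 := ones_step_ge n m hn hm x hx1
  rcases Nat.lt_or_ge (ones (majStep (clrN n) x)) (m+2) with h2 | h2
  swap
  · rw [htop _ h2, hfix, hfix]
  have hy1 : ones (majStep (clrN n) x) = m+1 := by omega
  have hge2 := ones_step_ge n m hn hm (majStep (clrN n) x) hy1
  rcases Nat.lt_or_ge (ones (majStep (clrN n) (majStep (clrN n) x))) (m+2) with h3 | h3
  swap
  · rw [htop _ h3, hfix]
  have hz1 : ones (majStep (clrN n) (majStep (clrN n) x)) = m+1 := by omega
  have hge3 := ones_step_ge n m hn hm (majStep (clrN n) (majStep (clrN n) x)) hz1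
  rcases Nat.lt_or_ge (ones (majStep (clrN n) (majStep (clrN n) (majStep (clrN n) x)))) (m+2)
    with h4 | h4
  swap
  · exact htop _ h4
  exfalso
  have hw1 : ones (majStep (clrN n) (majStep (clrN n) (majStep (clrN n) x))) = m+1 := by omega
  have hfx : Fam n m x := fam_of_eq n m hn hm x hx1 hy1
  have hfy : Fam n m (majStep (clrN n) x) := fam_of_eq n m hn hm _ hy1 hz1
  have hfz : Fam n m (majStep (clrN n) (majStep (clrN n) x)) := fam_of_eq n m hn hm _ hz1 hw1
  exact K5 n m hn hm x hx1 hy1 hfx hfy hfz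

lemma compl_iter (hn : n = 2*m+1) (hm : 3 ≤ m) (x : Fin n → Bool) (k : ℕ) :
    (majStep (clrN n))^[k] (fun v => !(x v)) = fun v => !((majStep (clrN n))^[k] x v) := by
  induction k with
  | zero => simp
  | succ k ih =>
      rw [Function.iterate_succ_apply', Function.iterate_succ_apply', ih]
      exact funext fun v => step_compl n m hn hm _ v

end CLR

/-- the complementary-left-right network solves DCT,
converging within at most 4 iterations. -/
theorem stmt10 (n : ℕ) (hn : Odd n) (h7 : 7 ≤ n) :
    (∀ x : Fin n → Bool, zeros x < ones x →
      (majStep (clrN n))^[4] x = fun _ => true) ∧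
    (∀ x : Fin n → Bool, ones x < zeros x →
      (majStep (clrN n))^[4] x = fun _ => false) := by
  obtain ⟨m, hmn⟩ := hn
  have hn2 : n = 2*m+1 := by omega
  have hm3 : 3 ≤ m := by omega
  constructor
  · intro x hlt
    have h1 := CLR.ones_add_zeros n x
    exact CLR.pos_case n m hn2 hm3 x (by omega)
  · intro x hlt
    have h1 := CLR.ones_add_zeros n x
    have hx' := CLR.ones_compl n x
    have hpos := CLR.pos_case n m hn2 hm3 (fun v => !(x v)) (by omega)
    rw [CLR.compl_iter n m hn2 hm3 x 4] at hpos
    funext v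
    have h2 := congrFun hpos v
    simp only [Bool.not_eq_true'] at h2
    exact h2
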